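/- The convex set S = {(x₁,x₂) ∈ ℝ² : x₁ ≥ 0, x₁² - x₂² - (x₁²+x₂²)² ≥ 0} (the convex branch of the lemniscate region) equals the projection onto (x₁,x₂) of the set of (x₁,x₂,u) such that [[x₁+u, x₂],[x₂, x₁-u]] ⪰ 0 and [[u, x₁, x₂],[x₁, 1, 0],[x₂, 0, 1]] ⪰ 0. -/

import Mathlib

open Matrix

/-- SDP representation of the convex branch of the lemniscate region
`{x₁ ≥ 0, x₁² - x₂² - (x₁²+x₂²)² ≥ 0}`. -/
theorem sdp_representation_lemniscate :
    {p : ℝ × ℝ | p.1 ≥ 0 ∧ p.1^2 - p.2^2 - (p.1^2 + p.2^2)^2 ≥ 0}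
      = {p : ℝ × ℝ | ∃ u : ℝ,
          (!![p.1 + u, p.2; p.2, p.1 - u] : Matrix (Fin 2) (Fin 2) ℝ).PosSemidef ∧
          (!![u, p.1, p.2; p.1, 1, 0; p.2, 0, 1] :
            Matrix (Fin 3) (Fin 3) ℝ).PosSemidef} := by
  ext ⟨x, y⟩
  simp only [Set.mem_setOf_eq]
  constructor
  · rintro ⟨hx, hd⟩
    refine ⟨x^2 + y^2, .of_dotProduct_mulVec_nonneg ?_ fun v => ?_, .of_dotProduct_mulVec_nonneg ?_ fun v => ?_⟩
    · ext i j
      fin_cases i <;> fin_cases j <;>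
        simp [Matrix.conjTranspose, Matrix.vecHead, Matrix.vecTail]
    · have hv : star v ⬝ᵥ ((!![x + (x^2+y^2), y; y, x - (x^2+y^2)] :
            Matrix (Fin 2) (Fin 2) ℝ) *ᵥ v)
          = (x + (x^2+y^2)) * (v 0)^2 + 2*y*(v 0)*(v 1) + (x - (x^2+y^2)) * (v 1)^2 := by
        simp [dotProduct, Matrix.mulVec, Fin.sum_univ_succ]
        ring
      rw [hv]
      have ha : 0 ≤ x + (x^2+y^2) := by positivity
      have hdet : 0 ≤ (x + (x^2+y^2)) * (x - (x^2+y^2)) - y^2 := by nlinarith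
      rcases eq_or_lt_of_le ha with h | h
      · have hx0 : x = 0 := by nlinarith [sq_nonneg x, sq_nonneg y]
        have hy0 : y = 0 := by nlinarith [sq_nonneg y]
        subst hx0; subst hy0
        norm_num
      · nlinarith [sq_nonneg ((x + (x^2+y^2)) * v 0 + y * v 1),
          mul_nonneg hdet (sq_nonneg (v 1)), h]
    · ext i j
      fin_cases i <;> fin_cases j <;>
        simp [Matrix.conjTranspose, Matrix.vecHead, Matrix.vecTail]
    · have hv : star v ⬝ᵥ ((!![(x^2+y^2), x, y; x, 1, 0; y, 0, 1] :
            Matrix (Fin 3) (Fin 3) ℝ) *ᵥ v)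
          = (v 1 + x * v 0)^2 + (v 2 + y * v 0)^2 := by
        simp [dotProduct, Matrix.mulVec, Fin.sum_univ_succ]
        ring
      rw [hv]
      positivity
  · rintro ⟨u, h2', h3'⟩
    have h2 := h2'.dotProduct_mulVec_nonneg
    have h3 := h3'.dotProduct_mulVec_nonneg
    have e1 := h2 ![1, 0]
    have e2 := h2 ![0, 1]
    have e3 := h2 ![x - u, -y]
    have e5 := h2 ![y, -(x + u)]
    have e4 := h3 ![1, -x, -y]
    simp [dotProduct, Matrix.mulVec, Fin.sum_univ_succ] at e1 e2 e3 e4 e5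
    have hxnn : x ≥ 0 := by linarith
    refine ⟨hxnn, ?_⟩
    have hs : 0 ≤ x^2 + y^2 := by positivity
    have hu : 0 ≤ u := by linarith
    have hD : 0 ≤ 2 * x * (x^2 - u^2 - y^2) := by nlinarith
    rcases eq_or_lt_of_le hu with h | h
    · have : x^2 + y^2 = 0 := by linarith
      have hx0 : x = 0 := by nlinarith [sq_nonneg x, sq_nonneg y]
      have hy0 : y = 0 := by nlinarith [sq_nonneg y]
      subst hx0; subst hy0; norm_num
    · have hxpos : 0 < x := lt_of_lt_of_le h e2
      have hDnn : 0 ≤ x^2 - u^2 - y^2 := by nlinarith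
      nlinarith [mul_nonneg (by linarith : (0:ℝ) ≤ u - (x^2+y^2))
        (by linarith : (0:ℝ) ≤ u + (x^2+y^2))]
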